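/- Let A ∈ ℝ^{n×n} be Schur stable and M ∈ ℝ^{n×n}. Then the series S := Σ_{k=0}^{∞} (Aᵀ)^k M A^k converges and S is the unique solution of the discrete Lyapunov equation AᵀSA − S + M = 0. Moreover, if M is symmetric then S is symmetric, and if M is symmetric positive definite then S is symmetric positive definite. -/

import Mathlib

open Matrix Filter

/-- A real square matrix is Schur stable if every eigenvalue of it, regarded as a complex
matrix, has modulus strictly less than `1`. -/
def SchurStable {ι : Type*} [Fintype ι] [DecidableEq ι] (A : Matrix ι ι ℝ) : Prop :=
  ∀ μ : ℂ, ((A.map Complex.ofReal).charpoly).IsRoot μ → ‖μ‖ < 1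

section Aux

attribute [local instance] Matrix.linftyOpNormedAddCommGroup Matrix.linftyOpNormedRing
  Matrix.linftyOpNormedAlgebra

variable {n : ℕ}

lemma charmatrix_transpose' (A : Matrix (Fin n) (Fin n) ℂ) : charmatrix Aᵀ = (charmatrix A)ᵀ := by
  ext i j
  rcases eq_or_ne i j with h | h
  · subst h; simp [charmatrix_apply]
  · simp [charmatrix_apply, diagonal_apply_ne _ h, diagonal_apply_ne' _ h]

lemma charpoly_transpose' (A : Matrix (Fin n) (Fin n) ℂ) : Aᵀ.charpoly = A.charpoly := by
  rw [Matrix.charpoly, Matrix.charpoly, charmatrix_transpose', Matrix.det_transpose]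

lemma mem_spectrum_iff_isRoot (B : Matrix (Fin n) (Fin n) ℂ) (μ : ℂ) :
    μ ∈ spectrum ℂ B ↔ B.charpoly.IsRoot μ := by
  have hdet : B.charpoly.eval μ = (algebraMap ℂ (Matrix (Fin n) (Fin n) ℂ) μ - B).det := by
    rw [Matrix.charpoly, ← Polynomial.coe_evalRingHom, RingHom.map_det]
    congr 1
    ext i j
    rcases eq_or_ne i j with h | h
    · subst h
      simp [charmatrix_apply, Matrix.algebraMap_matrix_apply]
    · simp [charmatrix_apply, Matrix.algebraMap_matrix_apply, h,
        diagonal_apply_ne _ h]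
  rw [spectrum.mem_iff, Polynomial.IsRoot.def, hdet]
  rw [← not_iff_not, not_not, ← Ne, ← isUnit_iff_ne_zero, ← Matrix.isUnit_iff_isUnit_det]


open scoped NNReal ENNReal in
lemma pow_bound (A : Matrix (Fin n) (Fin n) ℝ) (hA : SchurStable A) :
    ∃ (C r : ℝ≥0), r < 1 ∧ ∀ k : ℕ, ‖A ^ k‖₊ ≤ C * r ^ k := by
  rcases Nat.eq_zero_or_pos n with hn | hn
  · refine ⟨0, 0, by norm_num, fun k => ?_⟩
    subst hn
    have : A ^ k = 0 := Subsingleton.elim _ _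
    simp [this]
  haveI : Nonempty (Fin n) := Fin.pos_iff_nonempty.mp hn
  haveI : Nontrivial (Matrix (Fin n) (Fin n) ℂ) := by infer_instance
  set B : Matrix (Fin n) (Fin n) ℂ := A.map Complex.ofReal with hB
  have hBpow : ∀ k : ℕ, B ^ k = (A ^ k).map Complex.ofReal := by
    intro k
    exact (map_pow (Complex.ofRealHom.mapMatrix) A k).symm
  have hnorm : ∀ k : ℕ, ‖A ^ k‖₊ = ‖B ^ k‖₊ := by
    intro k
    rw [hBpow k, Matrix.linfty_opNNNorm_def, Matrix.linfty_opNNNorm_def]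
    simp [Matrix.map_apply]
  have hρ : spectralRadius ℂ B < 1 := by
    have h1 : ∀ z ∈ spectrum ℂ B, ‖z‖₊ < (1 : ℝ≥0) := by
      intro z hz
      have := hA z ((mem_spectrum_iff_isRoot B z).mp hz)
      rw [← coe_nnnorm] at this
      exact_mod_cast this
    simpa using spectrum.spectralRadius_lt_of_forall_lt B h1
  obtain ⟨r, hr1, hr2⟩ := ENNReal.lt_iff_exists_nnreal_btwn.mp hρ
  have hr2' : r < 1 := by exact_mod_cast hr2
  set r' : ℝ≥0 := max r (1/2) with hr'
  have hr'1 : r' < 1 := max_lt hr2' (by exact_mod_cast (by norm_num : (1/2:ℝ) < 1))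
  have hr'0 : 0 < r' := lt_of_lt_of_le (by exact_mod_cast (by norm_num : (0:ℝ) < 1/2)) (le_max_right _ _)
  have hev : ∀ᶠ k in atTop, ‖B ^ k‖₊ ≤ r' ^ k := by
    have h := spectrum.pow_nnnorm_pow_one_div_tendsto_nhds_spectralRadius B
    have h2 : ∀ᶠ k : ℕ in atTop, ((‖B ^ k‖₊ : ℝ≥0∞) ^ (1 / (k:ℝ))) < (r : ℝ≥0∞) :=
      h.eventually_lt_const hr1
    filter_upwards [h2, eventually_ge_atTop 1] with k hk hk1
    have hk0 : (k : ℝ) ≠ 0 := Nat.cast_ne_zero.mpr (by omega)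
    have h3 : (((‖B ^ k‖₊ : ℝ≥0∞) ^ (1/(k:ℝ))) ^ (k:ℝ)) ≤ ((r : ℝ≥0∞)) ^ (k:ℝ) :=
      ENNReal.rpow_le_rpow hk.le (by positivity)
    rw [← ENNReal.rpow_mul, one_div, inv_mul_cancel₀ hk0, ENNReal.rpow_one,
      ENNReal.rpow_natCast] at h3
    have h4 : (‖B ^ k‖₊ : ℝ≥0∞) ≤ ((r' : ℝ≥0∞)) ^ k := by
      refine h3.trans ?_
      gcongr
      exact_mod_cast le_max_left r (1/2 : ℝ≥0)
    rw [← ENNReal.coe_pow, ENNReal.coe_le_coe] at h4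
    exact h4
  obtain ⟨N, hN⟩ := eventually_atTop.mp hev
  set C : ℝ≥0 := max 1 ((Finset.range N).sup fun k => ‖A ^ k‖₊ / r' ^ k) with hC
  refine ⟨C, r', hr'1, fun k => ?_⟩
  rcases lt_or_ge k N with h | h
  · have h5 : ‖A ^ k‖₊ / r' ^ k ≤ C :=
      le_max_of_le_right (Finset.le_sup (f := fun k => ‖A ^ k‖₊ / r' ^ k) (Finset.mem_range.mpr h))
    calc ‖A ^ k‖₊ = ‖A ^ k‖₊ / r' ^ k * r' ^ k := by
          rw [div_mul_cancel₀ _ (pow_ne_zero _ hr'0.ne')]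
      _ ≤ C * r' ^ k := mul_le_mul_left h5 _
  · rw [hnorm]
    exact le_trans (hN k h) (le_mul_of_one_le_left' (le_max_left _ _))


lemma schurStable_transpose (A : Matrix (Fin n) (Fin n) ℝ) (hA : SchurStable A) :
    SchurStable Aᵀ := by
  intro μ hμ
  apply hA μ
  rwa [Matrix.transpose_map, charpoly_transpose'] at hμ

open scoped NNReal in
lemma summable_and_unique (A M : Matrix (Fin n) (Fin n) ℝ) (hA : SchurStable A) :
    Summable (fun k : ℕ => (Aᵀ) ^ k * M * A ^ k) ∧
    (∀ D : Matrix (Fin n) (Fin n) ℝ, (∀ k : ℕ, (Aᵀ) ^ k * D * A ^ k = D) → D = 0) := by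
  obtain ⟨C₁, r₁, hr₁, hb₁⟩ := pow_bound A hA
  obtain ⟨C₂, r₂, hr₂, hb₂⟩ := pow_bound Aᵀ (schurStable_transpose A hA)
  have hq : r₂ * r₁ < 1 := by
    calc r₂ * r₁ ≤ 1 * r₁ := mul_le_mul_left hr₂.le r₁
      _ = r₁ := one_mul _
      _ < 1 := hr₁
  have hbound : ∀ (X : Matrix (Fin n) (Fin n) ℝ) (k : ℕ),
      ‖(Aᵀ) ^ k * X * A ^ k‖₊ ≤ C₂ * C₁ * ‖X‖₊ * (r₂ * r₁) ^ k := by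
    intro X k
    calc ‖(Aᵀ) ^ k * X * A ^ k‖₊ ≤ ‖(Aᵀ) ^ k * X‖₊ * ‖A ^ k‖₊ := nnnorm_mul_le _ _
      _ ≤ ‖(Aᵀ) ^ k‖₊ * ‖X‖₊ * ‖A ^ k‖₊ := mul_le_mul_left (nnnorm_mul_le _ _) _
      _ ≤ (C₂ * r₂ ^ k) * ‖X‖₊ * (C₁ * r₁ ^ k) :=
          mul_le_mul' (mul_le_mul_left (hb₂ k) _) (hb₁ k)
      _ = C₂ * C₁ * ‖X‖₊ * (r₂ * r₁) ^ k := by ring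
  constructor
  · apply Summable.of_nnnorm_bounded
      (g := fun k => C₂ * C₁ * ‖M‖₊ * (r₂ * r₁) ^ k)
      (((NNReal.summable_geometric hq).mul_left _)) (hbound M)
  · intro D hD
    have hDle : ∀ k : ℕ, ‖D‖ ≤ (C₂ * C₁ * ‖D‖₊ : ℝ≥0) * ((r₂ * r₁ : ℝ≥0) : ℝ) ^ k := by
      intro k
      have := hbound D k
      rw [hD k] at this
      calc (‖D‖ : ℝ) = ((‖D‖₊ : ℝ≥0) : ℝ) := rfl
        _ ≤ (((C₂ * C₁ * ‖D‖₊ * (r₂ * r₁) ^ k : ℝ≥0)) : ℝ) := by exact_mod_cast this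
        _ = _ := by push_cast; ring
    have htend : Tendsto (fun k : ℕ => ((C₂ * C₁ * ‖D‖₊ : ℝ≥0) : ℝ) * ((r₂ * r₁ : ℝ≥0) : ℝ) ^ k)
        atTop (nhds 0) := by
      rw [show (0:ℝ) = ((C₂ * C₁ * ‖D‖₊ : ℝ≥0) : ℝ) * 0 by ring]
      exact (tendsto_pow_atTop_nhds_zero_of_lt_one (by positivity)
        (by exact_mod_cast hq)).const_mul _
    have h0 : ‖D‖ ≤ 0 := ge_of_tendsto htend (Eventually.of_forall hDle)
    simpa using norm_le_zero_iff.mp h0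

end Aux

theorem stmt11 {n : ℕ} (A M : Matrix (Fin n) (Fin n) ℝ) (hA : SchurStable A) :
    ∃ S : Matrix (Fin n) (Fin n) ℝ,
      HasSum (fun k : ℕ => (Aᵀ) ^ k * M * A ^ k) S ∧
      (Aᵀ * S * A - S + M = 0) ∧
      (∀ S' : Matrix (Fin n) (Fin n) ℝ, Aᵀ * S' * A - S' + M = 0 → S' = S) ∧
      (M.IsSymm → S.IsSymm) ∧
      (M.IsSymm → M.PosDef → S.PosDef) := by
  classical
  obtain ⟨hsum, huniqD⟩ := summable_and_unique A M hA
  set f : ℕ → Matrix (Fin n) (Fin n) ℝ := fun k => (Aᵀ) ^ k * M * A ^ k with hf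
  have hS : HasSum f (∑' k, f k) := hsum.hasSum
  set S : Matrix (Fin n) (Fin n) ℝ := ∑' k, f k with hSdef
  have hf0 : f 0 = M := by simp [hf]
  -- the shifted sum
  have hshift : HasSum (fun k => f (k + 1)) (Aᵀ * S * A) := by
    have hcont : Continuous (fun X : Matrix (Fin n) (Fin n) ℝ => Aᵀ * X * A) :=
      (continuous_const.matrix_mul continuous_id).matrix_mul continuous_const
    have h2 := hS.map ((AddMonoidHom.mulRight A).comp (AddMonoidHom.mulLeft (Aᵀ))) hcont
    have h3 : ∀ k, Aᵀ * f k * A = f (k + 1) := by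
      intro k
      show Aᵀ * ((Aᵀ) ^ k * M * A ^ k) * A = (Aᵀ) ^ (k + 1) * M * A ^ (k + 1)
      rw [pow_succ' (Aᵀ), pow_succ A]
      noncomm_ring
    simpa only [Function.comp_def, AddMonoidHom.coe_comp, AddMonoidHom.coe_mulRight,
      AddMonoidHom.coe_mulLeft, h3] using h2
  have key : S = Aᵀ * S * A + M := by
    have h3 : HasSum f (Aᵀ * S * A + M) := by
      have h4 := (hasSum_nat_add_iff (f := f) 1).mp hshift
      simpa [hf0] using h4
    exact hS.unique h3
  have lyap : Aᵀ * S * A - S + M = 0 := by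
    nth_rewrite 2 [key]
    abel
  have uniq : ∀ S' : Matrix (Fin n) (Fin n) ℝ, Aᵀ * S' * A - S' + M = 0 → S' = S := by
    intro S' h'
    have e1 : Aᵀ * (S' - S) * A = S' - S := by
      have hA' : Aᵀ * S' * A = S' - M := by
        have h1 : Aᵀ * S' * A - S' = -M := by
          rwa [← eq_neg_iff_add_eq_zero] at h'
        have := sub_eq_iff_eq_add.mp h1
        rw [this]; abel
      have hAS : Aᵀ * S * A = S - M := by
        have h1 : Aᵀ * S * A - S = -M := by
          rwa [← eq_neg_iff_add_eq_zero] at lyap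
        have := sub_eq_iff_eq_add.mp h1
        rw [this]; abel
      rw [mul_sub, sub_mul, hA', hAS]
      abel
    have e2 : ∀ k : ℕ, (Aᵀ) ^ k * (S' - S) * A ^ k = S' - S := by
      intro k
      induction k with
      | zero => simp
      | succ k ih =>
        calc (Aᵀ) ^ (k + 1) * (S' - S) * A ^ (k + 1)
            = (Aᵀ) ^ k * (Aᵀ * (S' - S) * A) * A ^ k := by
              rw [pow_succ, pow_succ']; noncomm_ring
          _ = (Aᵀ) ^ k * (S' - S) * A ^ k := by rw [e1]
          _ = S' - S := ih
    have := huniqD (S' - S) e2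
    exact sub_eq_zero.mp this
  have symm : M.IsSymm → S.IsSymm := by
    intro hM
    have hcont : Continuous (fun X : Matrix (Fin n) (Fin n) ℝ => Xᵀ) :=
      continuous_id.matrix_transpose
    have h2 := hS.map (Matrix.transposeAddEquiv (Fin n) (Fin n) ℝ).toAddMonoidHom hcont
    have h3 : ∀ k, (f k)ᵀ = f k := by
      intro k
      simp only [hf, Matrix.transpose_mul, Matrix.transpose_pow, Matrix.transpose_transpose,
        hM.eq, mul_assoc]
    have h4 : HasSum f (Sᵀ) := by
      simpa only [Function.comp_def, Matrix.transposeAddEquiv_apply, h3,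
        AddEquiv.coe_toAddMonoidHom] using h2
    exact (hS.unique h4).symm
  refine ⟨S, hS, lyap, uniq, symm, ?_⟩
  intro hM hMpd
  have hSsymm := symm hM
  rw [Matrix.posDef_iff_dotProduct_mulVec]
  constructor
  · rw [Matrix.IsHermitian, Matrix.conjTranspose_eq_transpose_of_trivial]
    exact hSsymm
  · intro x hx
    have hcont : Continuous (fun X : Matrix (Fin n) (Fin n) ℝ => x ⬝ᵥ X *ᵥ x) :=
      continuous_const.dotProduct (continuous_id.matrix_mulVec continuous_const)
    have hg : ∀ X Y : Matrix (Fin n) (Fin n) ℝ,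
        (x ⬝ᵥ (X + Y) *ᵥ x) = (x ⬝ᵥ X *ᵥ x) + (x ⬝ᵥ Y *ᵥ x) := by
      intro X Y
      rw [Matrix.add_mulVec, dotProduct_add]
    have hq := hS.map (AddMonoidHom.mk' (fun X => x ⬝ᵥ X *ᵥ x) hg) hcont
    have hterm : ∀ k : ℕ, x ⬝ᵥ (f k) *ᵥ x = (A ^ k *ᵥ x) ⬝ᵥ M *ᵥ (A ^ k *ᵥ x) := by
      intro k
      rw [hf]
      simp only [← Matrix.mulVec_mulVec]
      rw [Matrix.dotProduct_mulVec, ← Matrix.transpose_pow, Matrix.vecMul_transpose]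
    have hq2 : HasSum (fun k => (A ^ k *ᵥ x) ⬝ᵥ M *ᵥ (A ^ k *ᵥ x)) (x ⬝ᵥ S *ᵥ x) := by
      simpa only [Function.comp_def, AddMonoidHom.mk'_apply, hterm] using hq
    have hpos0 : 0 < (A ^ 0 *ᵥ x) ⬝ᵥ M *ᵥ (A ^ 0 *ᵥ x) := by
      simpa using hMpd.dotProduct_mulVec_pos hx
    have hle : (A ^ 0 *ᵥ x) ⬝ᵥ M *ᵥ (A ^ 0 *ᵥ x) ≤ x ⬝ᵥ S *ᵥ x := by
      refine le_hasSum hq2 0 fun i _ => ?_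
      simpa using hMpd.posSemidef.dotProduct_mulVec_nonneg (A ^ i *ᵥ x)
    simpa using lt_of_lt_of_le hpos0 hle
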